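/- Let G be a dart-free graph containing an induced complement of a cycle C_k with k ≥ 7, say H with vertices v_1,...,v_k where the non-edges are exactly v_i v_{i+1} (indices mod k). Suppose H⁺ is nonempty and x ∈ H⁺. If x is adjacent to v_i for some i, then x is adjacent to v_{i-2} and v_{i+2}. -/

import Mathlib

open SimpleGraph

/-- The dart: vertices a,b,c,d,e = 0,1,2,3,4; edges ab, ac, ad, bd, cd, de. -/
def dartGraph : SimpleGraph (Fin 5) :=
  SimpleGraph.fromEdgeSet {s(0,1), s(0,2), s(0,3), s(1,3), s(2,3), s(3,4)}

/-- The bull: vertices a,b,c,d,e = 0,1,2,3,4; edges ab, bc, cd, be, ce. -/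
def bullGraph : SimpleGraph (Fin 5) :=
  SimpleGraph.fromEdgeSet {s(0,1), s(1,2), s(2,3), s(1,4), s(2,4)}

/-- The house: C4 on v1..v4 = 0..3 plus v5 = 4 adjacent to v2 = 1 and v3 = 2. -/
def houseGraph : SimpleGraph (Fin 5) :=
  SimpleGraph.fromEdgeSet {s(0,1), s(1,2), s(2,3), s(3,0), s(4,1), s(4,2)}

/-- Anti-neighborhood of a vertex: all vertices distinct from and nonadjacent to `v`. -/
def vertexAnti {V : Type*} (G : SimpleGraph V) (v : V) : Set V :=
  {u | u ≠ v ∧ ¬ G.Adj v u}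

/-- Anti-neighborhood of a set `S`: vertices outside `S` with no neighbor in `S`. -/
def antiNbhd {V : Type*} (G : SimpleGraph V) (S : Set V) : Set V :=
  {v | v ∉ S ∧ ∀ u ∈ S, ¬ G.Adj v u}

/-- Contact vertices of `S`: outside `S`, with a neighbor in `S` and a neighbor in `antiNbhd G S`. -/
def contactSet {V : Type*} (G : SimpleGraph V) (S : Set V) : Set V :=
  {v | v ∉ S ∧ (∃ u ∈ S, G.Adj v u) ∧ ∃ w ∈ antiNbhd G S, G.Adj v w}

/-- `G` has a clique cutset: a clique whose removal disconnects the graph. -/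
def HasCliqueCutset {V : Type*} (G : SimpleGraph V) : Prop :=
  ∃ C : Set V, G.IsClique C ∧ ¬ (G.induce Cᶜ).Preconnected

/-- `U` is a module: no outside vertex distinguishes two vertices of `U`. -/
def IsModule {V : Type*} (G : SimpleGraph V) (U : Set V) : Prop :=
  ∀ z ∉ U, (∀ x ∈ U, G.Adj z x) ∨ (∀ x ∈ U, ¬ G.Adj z x)

/-- `G` is prime: all its modules are trivial. -/
def IsPrime {V : Type*} (G : SimpleGraph V) : Prop :=
  ∀ U : Set V, IsModule G U → U = ∅ ∨ (∃ x, U = {x}) ∨ U = Set.univ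

/-- `G` is perfect: every induced subgraph has chromatic number equal to clique number. -/
def IsPerfect {V : Type*} (G : SimpleGraph V) : Prop :=
  ∀ s : Set V, (G.induce s).chromaticNumber = ((G.induce s).cliqueNum : ℕ∞)

/-- Distance from a vertex to a set of vertices. -/
noncomputable def setDist {V : Type*} (G : SimpleGraph V) (v : V) (S : Set V) : ℕ :=
  sInf {n | ∃ u ∈ S, n = G.dist v u}

section DartFreeAux

open Fin.CommRing

lemma dart_of_verts' {V : Type*} (G : SimpleGraph V)
    (hdart : IsEmpty (dartGraph ↪g G)) (a b c d e : V)
    (hab : G.Adj a b) (hac : G.Adj a c) (had : G.Adj a d) (hbd : G.Adj b d)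
    (hcd : G.Adj c d) (hde : G.Adj d e)
    (hbc : ¬ G.Adj b c) (hae : ¬ G.Adj a e) (hbe : ¬ G.Adj b e) (hce : ¬ G.Adj c e)
    (nbc : b ≠ c) (nae : a ≠ e) (nbe : b ≠ e) (nce : c ≠ e) :
    False := by
  have hinj : Function.Injective (![a,b,c,d,e]) := by
    intro p q h
    fin_cases p <;> fin_cases q <;> simp_all
  have sab := hab.symm; have sac := hac.symm; have sad := had.symm
  have sbd := hbd.symm; have scd := hcd.symm; have sde := hde.symm
  have scb : ¬ G.Adj c b := fun h => hbc h.symm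
  have sea : ¬ G.Adj e a := fun h => hae h.symm
  have seb : ¬ G.Adj e b := fun h => hbe h.symm
  have sec : ¬ G.Adj e c := fun h => hce h.symm
  exact hdart.false ⟨⟨![a,b,c,d,e], hinj⟩, by
    intro p q
    fin_cases p <;> fin_cases q <;>
      simp [dartGraph, Sym2.eq, Sym2.rel_iff'] <;> simp_all⟩

variable {k : ℕ} [NeZero k]

lemma cast_val_small (c : ℕ) (h : c < k) : ((c : Fin k)).val = c := by
  simp [Fin.val_natCast, Nat.mod_eq_of_lt h]

lemma neg_diff (c : ℕ) (hck : c ≤ k) {u v : Fin k} (h : u - v = (c : Fin k)) :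
    v - u = ((k - c : ℕ) : Fin k) := by
  have h0 : ((c : Fin k)) + ((k - c : ℕ) : Fin k) = 0 := by
    rw [← Nat.cast_add]
    have : c + (k - c) = k := by omega
    rw [this, Fin.natCast_self]
  have hvu : v - u = -(u - v) := by ring
  rw [hvu, h, neg_eq_of_add_eq_zero_right h0]

lemma adj_of_diff (hk : 7 ≤ k) {u v : Fin k} (c : ℕ) (hc2 : 2 ≤ c) (hc : c + 1 < k)
    (h : u - v = (c : Fin k)) : (SimpleGraph.cycleGraph k)ᶜ.Adj u v := by
  have h1 : (u - v).val = c := by rw [h]; exact cast_val_small c (by omega)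
  have h2 : (v - u).val = k - c := by
    rw [neg_diff c (by omega) h]; exact cast_val_small _ (by omega)
  rw [SimpleGraph.compl_adj]
  refine ⟨fun he => ?_, fun hadj => ?_⟩
  · rw [he, sub_self] at h1; simp at h1; omega
  · rcases SimpleGraph.cycleGraph_adj'.mp hadj with h' | h' <;> omega

lemma nadj_of_diff (hk : 7 ≤ k) {u v : Fin k} (h : u - v = 1) :
    ¬ (SimpleGraph.cycleGraph k)ᶜ.Adj u v := by
  rw [SimpleGraph.compl_adj]
  rintro ⟨-, hn⟩
  exact hn (SimpleGraph.cycleGraph_adj'.mpr (Or.inl (by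
    rw [h]
    have h1 : (1 : Fin k) = ((1 : ℕ) : Fin k) := by norm_cast
    rw [h1]; exact cast_val_small 1 (by omega))))

lemma ne_of_diff (hk : 7 ≤ k) {u v : Fin k} (c : ℕ) (hc0 : c ≠ 0) (hck : c < k)
    (h : u - v = (c : Fin k)) : u ≠ v := by
  intro he
  rw [he, sub_self] at h
  have h2 := congrArg Fin.val h
  rw [cast_val_small c hck] at h2
  simp at h2; omega

lemma plus_two {V : Type*} (G : SimpleGraph V)
    (hdart : IsEmpty (dartGraph ↪g G))
    (hk : 7 ≤ k) (f : (cycleGraph k)ᶜ ↪g G)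
    (x : V) (hx : x ∈ contactSet G (Set.range f))
    (i : Fin k) (hxi : G.Adj x (f i)) :
    G.Adj x (f (i + 2)) := by
  obtain ⟨hxr, -, w, hw, hxw⟩ := hx
  obtain ⟨hwr, hwn⟩ := hw
  have hxne : ∀ j : Fin k, x ≠ f j := fun j h => hxr ⟨j, h.symm⟩
  have hwne : ∀ j : Fin k, w ≠ f j := fun j h => hwr ⟨j, h.symm⟩
  have hwna : ∀ j : Fin k, ¬ G.Adj w (f j) := fun j => hwn (f j) ⟨j, rfl⟩
  have fadj : ∀ (a b : Fin k) (c : ℕ), 2 ≤ c → c + 1 < k → a - b = (c : Fin k) →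
      G.Adj (f a) (f b) := fun a b c h1 h2 h3 => f.map_rel_iff.mpr (adj_of_diff hk c h1 h2 h3)
  have fnadj : ∀ (a b : Fin k), a - b = 1 → ¬ G.Adj (f a) (f b) :=
    fun a b h hadj => nadj_of_diff hk h (f.map_rel_iff.mp hadj)
  have fne : ∀ (a b : Fin k) (c : ℕ), c ≠ 0 → c < k → a - b = (c : Fin k) → f a ≠ f b :=
    fun a b c h1 h2 h3 he => ne_of_diff hk c h1 h2 h3 (f.injective he)
  by_contra hn2
  by_cases hA : G.Adj x (f (i - 2))
  · by_cases hC : G.Adj x (f (i + 1))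
    · -- dart (f(i-2), f i, f(i+1), x, w)
      exact dart_of_verts' G hdart (f (i-2)) (f i) (f (i+1)) x w
        ((fadj i (i-2) 2 (by omega) (by omega) (by push_cast; ring)).symm)
        ((fadj (i+1) (i-2) 3 (by omega) (by omega) (by push_cast; ring)).symm)
        hA.symm hxi.symm hC.symm hxw
        (fun h => fnadj (i+1) i (by ring) h.symm)
        (fun h => hwna (i-2) h.symm) (fun h => hwna i h.symm) (fun h => hwna (i+1) h.symm)
        (Ne.symm (fne (i+1) i 1 (by omega) (by omega) (by push_cast; ring)))
        (Ne.symm (hwne (i-2))) (Ne.symm (hwne i)) (Ne.symm (hwne (i+1)))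
    · -- dart (f i, f(i+2), x, f(i-2), f(i+1))
      exact dart_of_verts' G hdart (f i) (f (i+2)) x (f (i-2)) (f (i+1))
        ((fadj (i+2) i 2 (by omega) (by omega) (by push_cast; ring)).symm)
        hxi.symm
        (fadj i (i-2) 2 (by omega) (by omega) (by push_cast; ring))
        (fadj (i+2) (i-2) 4 (by omega) (by omega) (by push_cast; ring))
        hA
        ((fadj (i+1) (i-2) 3 (by omega) (by omega) (by push_cast; ring)).symm)
        (fun h => hn2 h.symm)
        (fun h => fnadj (i+1) i (by ring) h.symm)
        (fnadj (i+2) (i+1) (by ring))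
        hC
        (Ne.symm (hxne (i+2)))
        (Ne.symm (fne (i+1) i 1 (by omega) (by omega) (by push_cast; ring)))
        (fne (i+2) (i+1) 1 (by omega) (by omega) (by push_cast; ring))
        (hxne (i+1))
  · by_cases hD : G.Adj x (f (i + 3))
    · by_cases hB : G.Adj x (f (i - 1))
      · -- dart (f(i+3), f(i-1), f i, x, w)
        exact dart_of_verts' G hdart (f (i+3)) (f (i-1)) (f i) x w
          (fadj (i+3) (i-1) 4 (by omega) (by omega) (by push_cast; ring))
          (fadj (i+3) i 3 (by omega) (by omega) (by push_cast; ring))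
          hD.symm hB.symm hxi.symm hxw
          (fun h => fnadj i (i-1) (by ring) h.symm)
          (fun h => hwna (i+3) h.symm) (fun h => hwna (i-1) h.symm) (fun h => hwna i h.symm)
          (Ne.symm (fne i (i-1) 1 (by omega) (by omega) (by push_cast; ring)))
          (Ne.symm (hwne (i+3))) (Ne.symm (hwne (i-1))) (Ne.symm (hwne i))
      · -- dart (f i, f(i-2), x, f(i+3), f(i-1))
        exact dart_of_verts' G hdart (f i) (f (i-2)) x (f (i+3)) (f (i-1))
          (fadj i (i-2) 2 (by omega) (by omega) (by push_cast; ring))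
          hxi.symm
          ((fadj (i+3) i 3 (by omega) (by omega) (by push_cast; ring)).symm)
          ((fadj (i+3) (i-2) 5 (by omega) (by omega) (by push_cast; ring)).symm)
          hD
          (fadj (i+3) (i-1) 4 (by omega) (by omega) (by push_cast; ring))
          (fun h => hA h.symm)
          (fnadj i (i-1) (by ring))
          (fun h => fnadj (i-1) (i-2) (by ring) h.symm)
          hB
          (Ne.symm (hxne (i-2)))
          (fne i (i-1) 1 (by omega) (by omega) (by push_cast; ring))
          (Ne.symm (fne (i-1) (i-2) 1 (by omega) (by omega) (by push_cast; ring)))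
          (hxne (i-1))
    · -- dart (f(i-2), f(i+2), f(i+3), f i, x)
      exact dart_of_verts' G hdart (f (i-2)) (f (i+2)) (f (i+3)) (f i) x
        ((fadj (i+2) (i-2) 4 (by omega) (by omega) (by push_cast; ring)).symm)
        ((fadj (i+3) (i-2) 5 (by omega) (by omega) (by push_cast; ring)).symm)
        ((fadj i (i-2) 2 (by omega) (by omega) (by push_cast; ring)).symm)
        (fadj (i+2) i 2 (by omega) (by omega) (by push_cast; ring))
        (fadj (i+3) i 3 (by omega) (by omega) (by push_cast; ring))
        hxi.symm
        (fun h => fnadj (i+3) (i+2) (by ring) h.symm)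
        (fun h => hA h.symm) (fun h => hn2 h.symm) (fun h => hD h.symm)
        (Ne.symm (fne (i+3) (i+2) 1 (by omega) (by omega) (by push_cast; ring)))
        (Ne.symm (hxne (i-2))) (Ne.symm (hxne (i+2))) (Ne.symm (hxne (i+3)))

/-- Negation as an automorphism of the anti-hole. -/
def negIso (k : ℕ) [NeZero k] : (cycleGraph k)ᶜ ≃g (cycleGraph k)ᶜ where
  toEquiv := Equiv.neg (Fin k)
  map_rel_iff' := by
    intro u v
    show (cycleGraph k)ᶜ.Adj (-u) (-v) ↔ (cycleGraph k)ᶜ.Adj u v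
    simp only [SimpleGraph.compl_adj, SimpleGraph.cycleGraph_adj', ne_eq, neg_inj,
      show -u - -v = v - u by ring, show -v - -u = u - v by ring]
    tauto

end DartFreeAux


theorem stmt1 {V : Type*} [Fintype V] (G : SimpleGraph V)
    (hdart : IsEmpty (dartGraph ↪g G))
    (k : ℕ) [NeZero k] (hk : 7 ≤ k) (f : (cycleGraph k)ᶜ ↪g G)
    (hplus : (contactSet G (Set.range f)).Nonempty)
    (x : V) (hx : x ∈ contactSet G (Set.range f))
    (i : Fin k) (hxi : G.Adj x (f i)) :
    G.Adj x (f (i - 2)) ∧ G.Adj x (f (i + 2)) := by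
  refine ⟨?_, plus_two G hdart hk f x hx i hxi⟩
  set g : (cycleGraph k)ᶜ ↪g G := f.comp (negIso k).toEmbedding with hg
  have hgapp : ∀ j : Fin k, g j = f (-j) := fun j => rfl
  have hr : Set.range ⇑g = Set.range ⇑f := by
    ext y
    simp only [Set.mem_range]
    constructor
    · rintro ⟨j, rfl⟩; exact ⟨-j, (hgapp j).symm⟩
    · rintro ⟨j, rfl⟩; exact ⟨-j, by rw [hgapp, neg_neg]⟩
  have hx' : x ∈ contactSet G (Set.range g) := by rw [hr]; exact hx
  have h1 := plus_two G hdart hk g x hx' (-i) (by rw [hgapp, neg_neg]; exact hxi)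
  rw [hgapp] at h1
  have h2 : -(-i + 2) = i - 2 := by open Fin.CommRing in ring
  rwa [h2] at h1
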